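/- The group of all (abstract) characters from the multiplicative group of the algebraic closure of F_p to itself (equivalently, to any algebraically closed field of characteristic p containing it) is isomorphic, as an abelian group, to the inverse limit of the system ℤ/(p^{n!} − 1)ℤ with transition maps given by reduction (using that (p^{m!} − 1) | (p^{n!} − 1) for m ≤ n). -/

import Mathlib

/-- `p^{m!} - 1` divides `p^{n!} - 1` for `m ≤ n`. -/
theorem pow_factorial_sub_one_dvd (p : ℕ) {m n : ℕ} (h : m ≤ n) :
    p ^ (Nat.factorial m) - 1 ∣ p ^ (Nat.factorial n) - 1 := by
  obtain ⟨k, hk⟩ := Nat.factorial_dvd_factorial h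
  have := Nat.sub_dvd_pow_sub_pow (p ^ (Nat.factorial m)) 1 k
  rwa [one_pow, ← pow_mul, ← hk] at this

/-- The inverse limit of the system `ℤ/(p^{n!} - 1)ℤ` with reduction transition maps,
realized as the additive subgroup of compatible tuples. -/
def invLimitZMod (p : ℕ) : AddSubgroup (∀ n : ℕ, ZMod (p ^ (Nat.factorial n) - 1)) where
  carrier := {x | ∀ m n : ℕ, (h : m ≤ n) →
    ZMod.castHom (pow_factorial_sub_one_dvd p h) (ZMod (p ^ (Nat.factorial m) - 1)) (x n) = x m}
  add_mem' := by
    intro a b ha hb m n h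
    simp only [Pi.add_apply, map_add, ha m n h, hb m n h]
  zero_mem' := by
    intro m n h
    simp
  neg_mem' := by
    intro a ha m n h
    simp only [Pi.neg_apply, map_neg, ha m n h]

section Aux

variable (p : ℕ) [hp : Fact p.Prime]

local notation "K" => AlgebraicClosure (ZMod p)

private lemma q_pos (n : ℕ) : 0 < p ^ Nat.factorial n - 1 := by
  have h2 : 2 ≤ p := hp.out.two_le
  have h3 : p ≤ p ^ Nat.factorial n := Nat.le_self_pow (Nat.factorial_pos n).ne' p
  omega

private lemma sub_one_dvd_sub_one {a b : ℕ} (h : a ∣ b) : p ^ a - 1 ∣ p ^ b - 1 := by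
  obtain ⟨c, hc⟩ := h
  have := Nat.sub_dvd_pow_sub_pow (p ^ a) 1 c
  rwa [one_pow, ← pow_mul, ← hc] at this

private lemma cast_q_ne (n : ℕ) : ((p ^ Nat.factorial n - 1 : ℕ) : K) ≠ 0 := by
  have h1 : 1 ≤ p ^ Nat.factorial n := Nat.one_le_pow _ _ hp.out.pos
  rw [Nat.cast_sub h1, Nat.cast_pow, Nat.cast_one, CharP.cast_eq_zero K p,
    zero_pow (Nat.factorial_pos n).ne', zero_sub]
  exact neg_ne_zero.mpr one_ne_zero

private lemma exists_prim (n : ℕ) :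
    ∃ u : Kˣ, IsPrimitiveRoot u (p ^ Nat.factorial n - 1) := by
  haveI : NeZero ((p ^ Nat.factorial n - 1 : ℕ) : K) := ⟨cast_q_ne p n⟩
  obtain ⟨ζ, hζ⟩ := HasEnoughRootsOfUnity.exists_primitiveRoot K (p ^ Nat.factorial n - 1)
  exact ⟨_, hζ.isUnit_unit (q_pos p n).ne'⟩

private lemma eq_one_of_pow_p_pow {t : Kˣ} {a : ℕ} (h : t ^ (p ^ a) = 1) : t = 1 := by
  induction a with
  | zero => simpa using h
  | succ a ih =>
    apply ih
    have h1 : (t ^ p ^ a) ^ p = 1 := by rw [← pow_mul, ← pow_succ]; exact h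
    have h2 : frobenius K p ((t ^ p ^ a : Kˣ) : K) = frobenius K p 1 := by
      simp only [frobenius_def, ← Units.val_pow_eq_pow_val, h1, Units.val_one, one_pow]
    exact Units.ext (frobenius_inj K p h2)

private lemma exists_pow_q_eq_one (t : Kˣ) :
    ∃ n : ℕ, t ^ (p ^ Nat.factorial n - 1) = 1 := by
  classical
  -- `t` has finite order
  set x : K := (t : K) with hx
  have hint : IsIntegral (ZMod p) x := Algebra.IsIntegral.isIntegral x
  set E := IntermediateField.adjoin (ZMod p) {x} with hE
  haveI : FiniteDimensional (ZMod p) E := IntermediateField.adjoin.finiteDimensional hint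
  haveI : Finite E := Module.finite_of_finite (ZMod p)
  have hxE : x ∈ E := IntermediateField.mem_adjoin_simple_self (ZMod p) x
  have hx0 : (⟨x, hxE⟩ : E) ≠ 0 := by
    intro h
    exact t.ne_zero (congrArg Subtype.val h)
  set u : Eˣ := Units.mk0 ⟨x, hxE⟩ hx0 with hu
  obtain ⟨m, hm0, hm⟩ := isOfFinOrder_of_finite u
  rw [isPeriodicPt_mul_iff_pow_eq_one] at hm
  have htm : t ^ m = 1 := by
    have h1 : (u : E) ^ m = 1 := by
      rw [← Units.val_pow_eq_pow_val, hm, Units.val_one]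
    have h2 : ((⟨x, hxE⟩ : E) : K) ^ m = 1 := by
      have h3 : (((⟨x, hxE⟩ : E) ^ m : E) : K) = ((1 : E) : K) := by
        exact_mod_cast congrArg (fun y : E => (y : K)) h1
      simpa using h3
    ext
    simpa using h2
  -- extract the part of `m` prime to `p`
  have hm0' : m ≠ 0 := hm0.ne'
  set a := m.factorization p with ha
  set d := m / p ^ a with hd
  have hmd : p ^ a * d = m := Nat.ordProj_mul_ordCompl_eq_self m p
  have htd : t ^ d = 1 := by
    apply eq_one_of_pow_p_pow p
    rw [← pow_mul, mul_comm d (p ^ a), hmd, htm]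
  have hd0 : 0 < d := Nat.ordCompl_pos p hm0'
  have hpd : ¬ p ∣ d := Nat.not_dvd_ordCompl hp.out hm0'
  have hcop : Nat.Coprime p d := (Nat.Prime.coprime_iff_not_dvd hp.out).mpr hpd
  set e := Nat.totient d with he
  have he0 : 0 < e := Nat.totient_pos.mpr hd0
  have hed : e ≤ d := Nat.totient_le d
  have hmodeq : p ^ e ≡ 1 [MOD d] := Nat.ModEq.pow_totient hcop
  have hdvd1 : d ∣ p ^ e - 1 :=
    (Nat.modEq_iff_dvd' (Nat.one_le_pow _ _ hp.out.pos)).mp hmodeq.symm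
  have hdvd2 : p ^ e - 1 ∣ p ^ Nat.factorial d - 1 :=
    sub_one_dvd_sub_one p (Nat.dvd_factorial he0 hed)
  obtain ⟨c, hc⟩ := hdvd1.trans hdvd2
  exact ⟨d, by rw [hc, pow_mul, htd, one_pow]⟩

open scoped Classical in
/-- Canonical index at which `t` becomes a root of unity. -/
private noncomputable def chIdx (t : Kˣ) : ℕ := Nat.find (exists_pow_q_eq_one p t)

open scoped Classical in
private lemma chIdx_spec (t : Kˣ) : t ^ (p ^ Nat.factorial (chIdx p t) - 1) = 1 :=
  Nat.find_spec (exists_pow_q_eq_one p t)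

private lemma pow_q_eq_one_of_le {t : Kˣ} {m n : ℕ} (h : m ≤ n)
    (ht : t ^ (p ^ Nat.factorial m - 1) = 1) : t ^ (p ^ Nat.factorial n - 1) = 1 := by
  obtain ⟨c, hc⟩ := pow_factorial_sub_one_dvd p h
  rw [hc, pow_mul, ht, one_pow]

private lemma pow_mod {t : Kˣ} {q : ℕ} (hq : t ^ q = 1) (m : ℕ) : t ^ (m % q) = t ^ m :=
  pow_eq_pow_iff_modEq.mpr ((Nat.mod_modEq m q).of_dvd (orderOf_dvd_of_pow_eq_one hq))

private lemma pow_val_eq_of_le (x : invLimitZMod p) {t : Kˣ} {a N : ℕ} (h : a ≤ N)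
    (ha : t ^ (p ^ Nat.factorial a - 1) = 1) :
    t ^ ((x : ∀ n : ℕ, ZMod (p ^ Nat.factorial n - 1)) a).val
      = t ^ ((x : ∀ n : ℕ, ZMod (p ^ Nat.factorial n - 1)) N).val := by
  haveI : NeZero (p ^ Nat.factorial a - 1) := ⟨(q_pos p a).ne'⟩
  haveI : NeZero (p ^ Nat.factorial N - 1) := ⟨(q_pos p N).ne'⟩
  have hcast := x.2 a N h
  set xa := (x : ∀ n : ℕ, ZMod (p ^ Nat.factorial n - 1)) a with hxa
  set xN := (x : ∀ n : ℕ, ZMod (p ^ Nat.factorial n - 1)) N with hxN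
  have hmod : xN.val ≡ xa.val [MOD p ^ Nat.factorial a - 1] := by
    rw [← ZMod.natCast_eq_natCast_iff, ZMod.natCast_val, ZMod.natCast_val, ZMod.cast_id,
      ← hcast, ZMod.castHom_apply]
  have hord : orderOf t ∣ p ^ Nat.factorial a - 1 := orderOf_dvd_of_pow_eq_one ha
  exact (pow_eq_pow_iff_modEq.mpr (hmod.of_dvd hord)).symm

private lemma pow_val_eq (x : invLimitZMod p) {t : Kˣ} {a b : ℕ}
    (ha : t ^ (p ^ Nat.factorial a - 1) = 1) (hb : t ^ (p ^ Nat.factorial b - 1) = 1) :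
    t ^ ((x : ∀ n : ℕ, ZMod (p ^ Nat.factorial n - 1)) a).val
      = t ^ ((x : ∀ n : ℕ, ZMod (p ^ Nat.factorial n - 1)) b).val := by
  rw [pow_val_eq_of_le p x (le_max_left a b) ha, pow_val_eq_of_le p x (le_max_right a b) hb]

/-- The character associated to a compatible system of exponents. -/
private noncomputable def charOf (x : invLimitZMod p) : Kˣ →* Kˣ where
  toFun t := t ^ ((x : ∀ n : ℕ, ZMod (p ^ Nat.factorial n - 1)) (chIdx p t)).val
  map_one' := one_pow _
  map_mul' s t := by
    set N := max (chIdx p s) (max (chIdx p t) (chIdx p (s * t))) with hN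
    have hs : chIdx p s ≤ N := le_max_left _ _
    have ht : chIdx p t ≤ N := (le_max_left _ _).trans (le_max_right _ _)
    have hst : chIdx p (s * t) ≤ N := (le_max_right _ _).trans (le_max_right _ _)
    rw [pow_val_eq_of_le p x hst (chIdx_spec p (s * t)),
      pow_val_eq_of_le p x hs (chIdx_spec p s),
      pow_val_eq_of_le p x ht (chIdx_spec p t), mul_pow]

private lemma charOf_apply (x : invLimitZMod p) {t : Kˣ} {n : ℕ}
    (ht : t ^ (p ^ Nat.factorial n - 1) = 1) :
    charOf p x t = t ^ ((x : ∀ n : ℕ, ZMod (p ^ Nat.factorial n - 1)) n).val :=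
  pow_val_eq p x (chIdx_spec p t) ht

/-- The additive hom from the inverse limit to characters. -/
private noncomputable def charAddHom : invLimitZMod p →+ Additive (Kˣ →* Kˣ) where
  toFun x := Additive.ofMul (charOf p x)
  map_zero' := by
    rw [← ofMul_one]
    apply congrArg Additive.ofMul
    apply MonoidHom.ext
    intro t
    haveI : NeZero (p ^ Nat.factorial (chIdx p t) - 1) := ⟨(q_pos p (chIdx p t)).ne'⟩
    show t ^ ((0 : ∀ n : ℕ, ZMod (p ^ Nat.factorial n - 1)) (chIdx p t)).val = 1
    simp [ZMod.val_zero]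
  map_add' x y := by
    rw [← ofMul_mul]
    apply congrArg Additive.ofMul
    apply MonoidHom.ext
    intro t
    set n := chIdx p t with hn
    haveI : NeZero (p ^ Nat.factorial n - 1) := ⟨(q_pos p n).ne'⟩
    show t ^ (((x : ∀ n : ℕ, ZMod (p ^ Nat.factorial n - 1)) n
        + (y : ∀ n : ℕ, ZMod (p ^ Nat.factorial n - 1)) n)).val
      = t ^ ((x : ∀ n : ℕ, ZMod (p ^ Nat.factorial n - 1)) n).val
        * t ^ ((y : ∀ n : ℕ, ZMod (p ^ Nat.factorial n - 1)) n).val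
    rw [ZMod.val_add, pow_mod p (chIdx_spec p t), pow_add]

private lemma charAddHom_injective : Function.Injective (charAddHom p) := by
  rw [injective_iff_map_eq_zero]
  intro x hx
  have hx1 : charOf p x = 1 := by
    have := congrArg Additive.toMul hx
    simpa [charAddHom] using this
  ext n
  haveI : NeZero (p ^ Nat.factorial n - 1) := ⟨(q_pos p n).ne'⟩
  obtain ⟨u, hu⟩ := exists_prim p n
  have hord : orderOf u = p ^ Nat.factorial n - 1 := hu.eq_orderOf.symm
  have hu1 : u ^ (p ^ Nat.factorial n - 1) = 1 := hu.pow_eq_one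
  have h1 : u ^ ((x : ∀ n : ℕ, ZMod (p ^ Nat.factorial n - 1)) n).val = 1 := by
    rw [← charOf_apply p x hu1, hx1]; rfl
  have h2 : p ^ Nat.factorial n - 1 ∣
      ((x : ∀ n : ℕ, ZMod (p ^ Nat.factorial n - 1)) n).val := by
    have h2' := orderOf_dvd_of_pow_eq_one h1
    rwa [hord] at h2'
  have h3 := ZMod.val_lt ((x : ∀ n : ℕ, ZMod (p ^ Nat.factorial n - 1)) n)
  have h4 : ((x : ∀ n : ℕ, ZMod (p ^ Nat.factorial n - 1)) n).val = 0 :=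
    Nat.eq_zero_of_dvd_of_lt h2 h3
  exact (ZMod.val_eq_zero _).mp h4

private lemma charAddHom_surjective : Function.Surjective (charAddHom p) := by
  intro σ'
  set σ := Additive.toMul σ' with hσ
  choose u hu using fun n => exists_prim p n
  have hufin : ∀ n, u n ^ (p ^ Nat.factorial n - 1) = 1 := fun n => (hu n).pow_eq_one
  have hmem : ∀ n, σ (u n) ∈ Subgroup.zpowers (u n) := by
    intro n
    haveI : NeZero (p ^ Nat.factorial n - 1) := ⟨(q_pos p n).ne'⟩
    rw [(hu n).zpowers_eq, mem_rootsOfUnity, ← map_pow, hufin n, map_one]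
  have hpow : ∀ n, ∃ c : ℕ, u n ^ c = σ (u n) := by
    intro n
    have hfin : IsOfFinOrder (u n) :=
      isOfFinOrder_iff_pow_eq_one.mpr ⟨_, q_pos p n, hufin n⟩
    obtain ⟨c, hc⟩ := (Submonoid.mem_powers_iff _ _).mp
      (hfin.mem_powers_iff_mem_zpowers.mpr (hmem n))
    exact ⟨c, hc⟩
  choose c hc using hpow
  -- key: on `(p^{n!}-1)`-th roots of unity, `σ` is `t ↦ t ^ c n`
  have key : ∀ (n : ℕ) (t : Kˣ), t ^ (p ^ Nat.factorial n - 1) = 1 → σ t = t ^ c n := by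
    intro n t ht
    have hfin : IsOfFinOrder (u n) :=
      isOfFinOrder_iff_pow_eq_one.mpr ⟨_, q_pos p n, hufin n⟩
    have htmem : t ∈ Subgroup.zpowers (u n) := by
      haveI : NeZero (p ^ Nat.factorial n - 1) := ⟨(q_pos p n).ne'⟩
      rw [(hu n).zpowers_eq, mem_rootsOfUnity]
      exact ht
    obtain ⟨d, hd⟩ := (Submonoid.mem_powers_iff _ _).mp
      (hfin.mem_powers_iff_mem_zpowers.mpr htmem)
    rw [← hd]
    calc σ (u n ^ d) = σ (u n) ^ d := map_pow σ (u n) d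
      _ = (u n ^ c n) ^ d := by rw [hc n]
      _ = (u n ^ d) ^ c n := by rw [← pow_mul, mul_comm, pow_mul]
  -- the compatible system
  have hcompat : (fun n => ((c n : ZMod (p ^ Nat.factorial n - 1)))) ∈ invLimitZMod p := by
    intro m n h
    haveI : NeZero (p ^ Nat.factorial m - 1) := ⟨(q_pos p m).ne'⟩
    rw [map_natCast, ZMod.natCast_eq_natCast_iff]
    have h1 : u m ^ (p ^ Nat.factorial n - 1) = 1 :=
      pow_q_eq_one_of_le p h (hufin m)
    have h2 : u m ^ c n = u m ^ c m := by
      rw [← key n (u m) h1, ← key m (u m) (hufin m)]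
    have h3 := pow_eq_pow_iff_modEq.mp h2
    rwa [← (hu m).eq_orderOf] at h3
  refine ⟨⟨_, hcompat⟩, ?_⟩
  show Additive.ofMul (charOf p ⟨_, hcompat⟩) = σ'
  rw [← ofMul_toMul σ']
  apply congrArg Additive.ofMul
  apply MonoidHom.ext
  intro t
  set n := chIdx p t with hn
  haveI : NeZero (p ^ Nat.factorial n - 1) := ⟨(q_pos p n).ne'⟩
  have h1 : charOf p ⟨_, hcompat⟩ t
      = t ^ ((c n : ZMod (p ^ Nat.factorial n - 1))).val :=
    charOf_apply p _ (chIdx_spec p t)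
  rw [h1, ZMod.val_natCast, pow_mod p (chIdx_spec p t), key n t (chIdx_spec p t)]

end Aux

/-- The group of abstract characters of the multiplicative group of the algebraic closure
of `F_p` (i.e. group homomorphisms `k^* → k^*` for `k = \bar F_p`) is isomorphic, as an
abelian group, to the inverse limit of `ℤ/(p^{n!} - 1)ℤ`. -/
theorem characters_iso_invLimit (p : ℕ) [Fact p.Prime] :
    Nonempty (Additive ((AlgebraicClosure (ZMod p))ˣ →* (AlgebraicClosure (ZMod p))ˣ)
      ≃+ invLimitZMod p) := by
  exact ⟨(AddEquiv.ofBijective (charAddHom p)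
    ⟨charAddHom_injective p, charAddHom_surjective p⟩).symm⟩
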